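/- For d ≥ 1, the super-operator Ψ₁ from d×d matrices to (d+1)×(d+1) matrices defined by letting Ψ₁[X] have (Tr(X)·I_d − Xᵀ)/(d+1) as its top-left d×d block, the scalar 2·Tr(X)/(d+1) in the bottom-right corner entry, and zeros elsewhere (where Xᵀ is the transpose of X) is a channel, i.e. it is completely positive and trace-preserving. -/

import Mathlib

open scoped Kronecker ComplexOrder Matrix

namespace ChannelDiscrimination

/-- The trace norm `Tr √(Aᴴ A)` of a complex square matrix. -/
noncomputable def traceNorm {ι : Type*} [Fintype ι] [DecidableEq ι]
    (A : Matrix ι ι ℂ) : ℝ :=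
  ((Matrix.posSemidef_conjTranspose_mul_self A).1.eigenvectorUnitary.1 *
    Matrix.diagonal (((↑) : ℝ → ℂ) ∘ (Real.sqrt ·) ∘ (Matrix.posSemidef_conjTranspose_mul_self A).1.eigenvalues) *
    (star (Matrix.posSemidef_conjTranspose_mul_self A).1.eigenvectorUnitary : Matrix ι ι ℂ)).trace.re

/-- A state: a positive semidefinite matrix of trace one. -/
def IsState {ι : Type*} [Fintype ι] (ρ : Matrix ι ι ℂ) : Prop :=
  ρ.PosSemidef ∧ ρ.trace = 1

/-- Separability of a bipartite matrix on `ℂ^m ⊗ ℂ^n`. -/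
def IsSeparable {m n : ℕ} (σ : Matrix (Fin m × Fin n) (Fin m × Fin n) ℂ) : Prop :=
  ∃ (N : ℕ) (p : Fin N → ℝ) (ρ : Fin N → Matrix (Fin m) (Fin m) ℂ)
    (τ : Fin N → Matrix (Fin n) (Fin n) ℂ),
    (∀ i, 0 ≤ p i) ∧ (∑ i, p i = 1) ∧ (∀ i, IsState (ρ i)) ∧ (∀ i, IsState (τ i)) ∧
    σ = ∑ i, (p i : ℂ) • (ρ i ⊗ₖ τ i)

/-- `Φ ⊗ id_n` for a super-operator `Φ` from `m×m` to `k×k` matrices. -/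
def tensorId {m k : ℕ} (n : ℕ)
    (Φ : Matrix (Fin m) (Fin m) ℂ →ₗ[ℂ] Matrix (Fin k) (Fin k) ℂ) :
    Matrix (Fin m × Fin n) (Fin m × Fin n) ℂ →ₗ[ℂ]
      Matrix (Fin k × Fin n) (Fin k × Fin n) ℂ where
  toFun M := Matrix.of fun p q => Φ (Matrix.of fun i j => M (i, p.2) (j, q.2)) p.1 q.1
  map_add' M N := by
    ext p q
    show Φ ((Matrix.of fun i j => M (i, p.2) (j, q.2)) +
        (Matrix.of fun i j => N (i, p.2) (j, q.2))) p.1 q.1 = _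
    rw [map_add]
    rfl
  map_smul' c M := by
    ext p q
    show Φ (c • (Matrix.of fun i j => M (i, p.2) (j, q.2))) p.1 q.1 = _
    rw [map_smul]
    rfl

/-- A positive super-operator. -/
def IsPositiveMap {m k : ℕ}
    (Φ : Matrix (Fin m) (Fin m) ℂ →ₗ[ℂ] Matrix (Fin k) (Fin k) ℂ) : Prop :=
  ∀ X : Matrix (Fin m) (Fin m) ℂ, X.PosSemidef → (Φ X).PosSemidef

/-- A trace-preserving super-operator. -/
def IsTracePreserving {m k : ℕ}
    (Φ : Matrix (Fin m) (Fin m) ℂ →ₗ[ℂ] Matrix (Fin k) (Fin k) ℂ) : Prop :=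
  ∀ X : Matrix (Fin m) (Fin m) ℂ, (Φ X).trace = X.trace

/-- A completely positive super-operator: `Φ ⊗ id_n` is positive for every `n`. -/
def IsCompletelyPositive {m k : ℕ}
    (Φ : Matrix (Fin m) (Fin m) ℂ →ₗ[ℂ] Matrix (Fin k) (Fin k) ℂ) : Prop :=
  ∀ (n : ℕ) (M : Matrix (Fin m × Fin n) (Fin m × Fin n) ℂ),
    M.PosSemidef → (tensorId n Φ M).PosSemidef

/-- A (quantum) channel: completely positive and trace-preserving. -/
def IsChannel {m k : ℕ}
    (Φ : Matrix (Fin m) (Fin m) ℂ →ₗ[ℂ] Matrix (Fin k) (Fin k) ℂ) : Prop :=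
  IsCompletelyPositive Φ ∧ IsTracePreserving Φ

/-- An entanglement-breaking channel. -/
def IsEntanglementBreaking {m k : ℕ}
    (Φ : Matrix (Fin m) (Fin m) ℂ →ₗ[ℂ] Matrix (Fin k) (Fin k) ℂ) : Prop :=
  IsChannel Φ ∧ ∀ (n : ℕ) (ρ : Matrix (Fin m × Fin n) (Fin m × Fin n) ℂ),
    IsState ρ → IsSeparable (tensorId n Φ ρ)

/-- `pad1 M c` is the `(k+1)×(k+1)` matrix with `M` as its top-left `k×k` block,
`c` in the bottom-right corner, and zeros elsewhere. -/
def pad1 {k : ℕ} (M : Matrix (Fin k) (Fin k) ℂ) (c : ℂ) :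
    Matrix (Fin (k + 1)) (Fin (k + 1)) ℂ :=
  Matrix.of fun a b =>
    Fin.lastCases (Fin.lastCases c (fun _ => 0) b)
      (fun i => Fin.lastCases 0 (fun j => M i j) b) a

/-- Partial transpose on the first tensor factor. -/
def ptransposeFst {d n : ℕ} (ρ : Matrix (Fin d × Fin n) (Fin d × Fin n) ℂ) :
    Matrix (Fin d × Fin n) (Fin d × Fin n) ℂ :=
  Matrix.of fun p q => ρ (q.1, p.2) (p.1, q.2)


-- smul psd
lemma psd_smul {n : Type*} [Fintype n] {A : Matrix n n ℂ} (hA : A.PosSemidef)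
    {t : ℝ} (ht : 0 ≤ t) : ((t : ℂ) • A).PosSemidef := by
  constructor
  · show _ = _
    rw [Matrix.conjTranspose_smul, hA.1.eq]
    simp [Complex.conj_ofReal]
  · intro x
    exact (hA.smul (a := (t : ℂ)) (by exact_mod_cast ht)).2 x

lemma psd_sum {n : Type*} [Fintype n] {ι : Type*} [Fintype ι]
    (f : ι → Matrix n n ℂ) (h : ∀ a, (f a).PosSemidef) :
    (∑ a, f a).PosSemidef :=
  Finset.sum_induction f _ (fun _ _ ha hb => ha.add hb) Matrix.PosSemidef.zero
    (fun a _ => h a)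

/-- A map with a (weighted) Kraus representation is completely positive. -/
lemma isCompletelyPositive_of_kraus {m k : ℕ} {ι : Type} [Fintype ι]
    (Φ : Matrix (Fin m) (Fin m) ℂ →ₗ[ℂ] Matrix (Fin k) (Fin k) ℂ)
    (K : ι → Matrix (Fin k) (Fin m) ℂ) (t : ι → ℝ) (ht : ∀ a, 0 ≤ t a)
    (hΦ : ∀ X, Φ X = ∑ a, (t a : ℂ) • (K a * X * (K a)ᴴ)) :
    IsCompletelyPositive Φ := by
  intro n M hM
  have hrep : tensorId n Φ M =
      ∑ a, (t a : ℂ) • ((K a ⊗ₖ (1 : Matrix (Fin n) (Fin n) ℂ)) * M *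
        (K a ⊗ₖ (1 : Matrix (Fin n) (Fin n) ℂ))ᴴ) := by
    ext ⟨a₁, a₂⟩ ⟨b₁, b₂⟩
    show Φ (Matrix.of fun i j => M (i, a₂) (j, b₂)) a₁ b₁ = _
    rw [hΦ]
    simp only [Matrix.sum_apply, Matrix.smul_apply, Matrix.mul_apply,
      Matrix.conjTranspose_apply, Matrix.kroneckerMap_apply, Matrix.one_apply,
      Fintype.sum_prod_type, Matrix.of_apply, smul_eq_mul, star_mul', apply_ite (star : ℂ → ℂ),
      star_one, star_zero, mul_ite, ite_mul, one_mul, zero_mul, mul_one, mul_zero,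
      Finset.sum_ite_eq, Finset.sum_ite_eq', Finset.mem_univ, if_true]
  rw [hrep]
  exact psd_sum _ fun a => psd_smul (hM.mul_mul_conjTranspose_same _) (ht a)

/-- For `d ≥ 1`, the super-operator
`Ψ₁[X] = pad1 ((Tr(X)·I_d − Xᵀ)/(d+1)) (2·Tr(X)/(d+1))` is a channel. -/
theorem Psi1_is_channel
    {d : ℕ} (hd : 1 ≤ d)
    (Ψ₁ : Matrix (Fin d) (Fin d) ℂ →ₗ[ℂ] Matrix (Fin (d + 1)) (Fin (d + 1)) ℂ)
    (hΨ₁ : ∀ X : Matrix (Fin d) (Fin d) ℂ,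
      Ψ₁ X = pad1 (((d : ℂ) + 1)⁻¹ • (X.trace • (1 : Matrix (Fin d) (Fin d) ℂ) - Xᵀ))
        (2 * X.trace / ((d : ℂ) + 1))) :
    IsChannel Ψ₁ := by
  constructor
  · refine isCompletelyPositive_of_kraus Ψ₁
      (Sum.elim
        (fun p : Fin d × Fin d => Matrix.of fun r c =>
            ((if r = p.1.castSucc ∧ c = p.2 then 1 else 0) -
             (if r = p.2.castSucc ∧ c = p.1 then 1 else 0)))
        (fun k : Fin d => Matrix.of fun r c =>
            if r = Fin.last d ∧ c = k then (1 : ℂ) else 0))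
      (Sum.elim (fun _ => (2 * ((d : ℝ) + 1))⁻¹) (fun _ => 2 / ((d : ℝ) + 1))) ?_ ?_
    · rintro (p | k) <;> simp only [Sum.elim_inl, Sum.elim_inr] <;> positivity
    · intro X
      rw [hΨ₁]
      have hne : ∀ i : Fin d, Fin.castSucc i ≠ Fin.last d :=
        fun i => (Fin.castSucc_lt_last i).ne
      have hne' : ∀ i : Fin d, Fin.last d ≠ Fin.castSucc i :=
        fun i => (Fin.castSucc_lt_last i).ne'
      ext r c
      rw [Fintype.sum_sum_type]
      induction r using Fin.lastCases with
      | last =>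
        induction c using Fin.lastCases with
        | last =>
          simp only [Sum.elim_inl, Sum.elim_inr, pad1, Matrix.of_apply,
            Fin.lastCases_last, Fin.lastCases_castSucc, Matrix.sum_apply, Matrix.add_apply,
            Matrix.smul_apply, Matrix.mul_apply, Matrix.conjTranspose_apply,
            star_sub, apply_ite (star : ℂ → ℂ), star_one, star_zero, sub_mul,
            mul_sub, ite_mul, mul_ite, zero_mul, mul_zero, one_mul, mul_one,
            Finset.sum_sub_distrib, Finset.sum_ite_eq, Finset.sum_ite_eq',
            Finset.mem_univ, if_true, if_false, ite_and, false_and, true_and, Fintype.sum_prod_type, smul_eq_mul,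
            Matrix.trace, Matrix.diag, Fin.castSucc_inj, hne, hne',
            if_false, ite_false, Finset.sum_const_zero, sub_zero, zero_sub,
            Matrix.sub_apply, Matrix.one_apply, Matrix.transpose_apply]
          simp only [Finset.sum_ite_irrel, Finset.sum_const_zero, ite_self,
            Finset.sum_ite_eq, Finset.sum_ite_eq', Finset.mem_univ, if_true,
            add_zero, zero_add, mul_zero, sub_zero, zero_sub, mul_ite, mul_sub]
          rw [← Finset.mul_sum]
          push_cast
          ring
        | cast c₀ =>
          simp only [Sum.elim_inl, Sum.elim_inr, pad1, Matrix.of_apply,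
            Fin.lastCases_last, Fin.lastCases_castSucc, Matrix.sum_apply, Matrix.add_apply,
            Matrix.smul_apply, Matrix.mul_apply, Matrix.conjTranspose_apply,
            star_sub, apply_ite (star : ℂ → ℂ), star_one, star_zero, sub_mul,
            mul_sub, ite_mul, mul_ite, zero_mul, mul_zero, one_mul, mul_one,
            Finset.sum_sub_distrib, Finset.sum_ite_eq, Finset.sum_ite_eq',
            Finset.mem_univ, if_true, if_false, ite_and, false_and, true_and, Fintype.sum_prod_type, smul_eq_mul,
            Matrix.trace, Matrix.diag, Fin.castSucc_inj, hne, hne',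
            if_false, ite_false, Finset.sum_const_zero, sub_zero, zero_sub,
            Matrix.sub_apply, Matrix.one_apply, Matrix.transpose_apply]
          simp only [Finset.sum_ite_irrel, Finset.sum_const_zero, ite_self,
            Finset.sum_ite_eq, Finset.sum_ite_eq', Finset.mem_univ, if_true,
            add_zero, zero_add, mul_zero, sub_zero, zero_sub, mul_ite, mul_sub]
      | cast r₀ =>
        induction c using Fin.lastCases with
        | last =>
          simp only [Sum.elim_inl, Sum.elim_inr, pad1, Matrix.of_apply,
            Fin.lastCases_last, Fin.lastCases_castSucc, Matrix.sum_apply, Matrix.add_apply,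
            Matrix.smul_apply, Matrix.mul_apply, Matrix.conjTranspose_apply,
            star_sub, apply_ite (star : ℂ → ℂ), star_one, star_zero, sub_mul,
            mul_sub, ite_mul, mul_ite, zero_mul, mul_zero, one_mul, mul_one,
            Finset.sum_sub_distrib, Finset.sum_ite_eq, Finset.sum_ite_eq',
            Finset.mem_univ, if_true, if_false, ite_and, false_and, true_and, Fintype.sum_prod_type, smul_eq_mul,
            Matrix.trace, Matrix.diag, Fin.castSucc_inj, hne, hne',
            if_false, ite_false, Finset.sum_const_zero, sub_zero, zero_sub,
            Matrix.sub_apply, Matrix.one_apply, Matrix.transpose_apply]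
          simp only [Finset.sum_ite_irrel, Finset.sum_const_zero, ite_self,
            Finset.sum_ite_eq, Finset.sum_ite_eq', Finset.mem_univ, if_true,
            add_zero, zero_add, mul_zero, sub_zero, zero_sub, mul_ite, mul_sub]
        | cast c₀ =>
          simp only [Sum.elim_inl, Sum.elim_inr, pad1, Matrix.of_apply,
            Fin.lastCases_last, Fin.lastCases_castSucc, Matrix.sum_apply, Matrix.add_apply,
            Matrix.smul_apply, Matrix.mul_apply, Matrix.conjTranspose_apply,
            star_sub, apply_ite (star : ℂ → ℂ), star_one, star_zero, sub_mul,
            mul_sub, ite_mul, mul_ite, zero_mul, mul_zero, one_mul, mul_one,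
            Finset.sum_sub_distrib, Finset.sum_ite_eq, Finset.sum_ite_eq',
            Finset.mem_univ, if_true, if_false, ite_and, false_and, true_and, Fintype.sum_prod_type, smul_eq_mul,
            Matrix.trace, Matrix.diag, Fin.castSucc_inj, hne, hne',
            if_false, ite_false, Finset.sum_const_zero, sub_zero, zero_sub,
            Matrix.sub_apply, Matrix.one_apply, Matrix.transpose_apply]
          simp only [Finset.sum_ite_irrel, Finset.sum_const_zero, ite_self,
            Finset.sum_ite_eq, Finset.sum_ite_eq', Finset.mem_univ, if_true,
            add_zero, zero_add, mul_zero, sub_zero, zero_sub, mul_ite, mul_sub]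
          simp only [Finset.sum_sub_distrib, Finset.sum_ite_eq, Finset.mem_univ,
            if_true]
          have hd1 : ((d : ℂ) + 1) ≠ 0 := by
            have h0 := Nat.cast_ne_zero (R := ℂ).mpr (Nat.succ_ne_zero d)
            push_cast at h0
            exact h0
          rcases eq_or_ne r₀ c₀ with h | h
          · subst h
            simp only [if_pos rfl, if_true]
            rw [← Finset.mul_sum]
            push_cast
            field_simp
            ring
          · simp only [if_neg h, Finset.sum_const_zero, zero_sub, sub_zero,
              zero_add, add_zero, zero_mul, mul_zero]
            push_cast
            field_simp
            ring
  · intro X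
    rw [hΨ₁]
    have hd1 : ((d : ℂ) + 1) ≠ 0 := by
      have h0 := Nat.cast_ne_zero (R := ℂ).mpr (Nat.succ_ne_zero d)
      push_cast at h0
      exact h0
    simp only [Matrix.trace, Matrix.diag, pad1, Matrix.of_apply,
      Fin.sum_univ_castSucc, Fin.lastCases_castSucc, Fin.lastCases_last,
      Matrix.smul_apply, Matrix.sub_apply, Matrix.one_apply,
      Matrix.transpose_apply, smul_eq_mul, eq_self_iff_true, if_true, mul_one]
    rw [← Finset.mul_sum, Finset.sum_sub_distrib, Finset.sum_const,
      Finset.card_univ, Fintype.card_fin, nsmul_eq_mul]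
    field_simp
    ring

end ChannelDiscrimination
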